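/- arXiv:2511.20687 — 3 statements merged into one kernel-verified Lean document; each statement's English description precedes it below -/
import Mathlib

section
/- Let U = Φ Σ Ψᵀ be a singular value decomposition of U, and for r ≤ min(N,m) let Φ_r ∈ ℝ^{N×r} consist of the first r columns of Φ. Then the squared Frobenius norm of the POD truncation error satisfies ‖U − Φ_r Φ_rᵀ U‖_F² = Σ_{i=r+1}^{min(N,m)} σ_i². -/
open Matrix BigOperators

/-- **POD truncation error via singular values.**
If `U = Φ * S * Ψᵀ` is a singular value decomposition of `U ∈ ℝ^{N×m}` (with `Φ`, `Ψ`
orthogonal, `S` diagonal with nonincreasing nonnegative diagonal entries `σ 0, σ 1, ...`),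
and `Φr` consists of the first `r ≤ min N m` columns of `Φ`, then the squared Frobenius
norm of the POD truncation error satisfies
`‖U − Φr Φrᵀ U‖_F² = ∑_{i = r}^{min N m - 1} (σ i)²` (0-based indexing). -/
theorem pod_truncation_error_eq_sum_sq_singular_values
    (N m r : ℕ) (hN : 0 < N) (hm : 0 < m) (hr : r ≤ min N m)
    (U : Matrix (Fin N) (Fin m) ℝ)
    (Φ : Matrix (Fin N) (Fin N) ℝ)
    (Ψ : Matrix (Fin m) (Fin m) ℝ)
    (S : Matrix (Fin N) (Fin m) ℝ)
    (σ : ℕ → ℝ)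
    (hΦ : Φᵀ * Φ = 1) (hΨ : Ψᵀ * Ψ = 1)
    (hSVD : U = Φ * S * Ψᵀ)
    (hS : ∀ (i : Fin N) (j : Fin m), S i j = if (i : ℕ) = (j : ℕ) then σ (i : ℕ) else 0)
    (hmono : ∀ i j : ℕ, i ≤ j → j < min N m → σ j ≤ σ i)
    (hnonneg : ∀ i : ℕ, i < min N m → 0 ≤ σ i)
    (Φr : Matrix (Fin N) (Fin r) ℝ)
    (hΦr : ∀ (i : Fin N) (j : Fin r),
      Φr i j = Φ i (Fin.castLE (hr.trans (min_le_left N m)) j)) :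
    ∑ i, ∑ j, (U - Φr * Φrᵀ * U) i j ^ 2 = ∑ i ∈ Finset.Ico r (min N m), σ i ^ 2 := by
  classical
  set D : Matrix (Fin N) (Fin N) ℝ :=
    Matrix.of (fun i k => if i = k ∧ (k : ℕ) < r then (1:ℝ) else 0) with hD
  set T : Matrix (Fin N) (Fin m) ℝ :=
    Matrix.of (fun i j => if (i : ℕ) = (j : ℕ) ∧ r ≤ (i : ℕ) then σ (i : ℕ) else 0) with hT
  have horth : ∀ a b : Fin N, (∑ l, Φ l a * Φ l b) = if a = b then (1:ℝ) else 0 := by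
    intro a b
    have := congrFun (congrFun hΦ a) b
    simpa [Matrix.mul_apply, Matrix.transpose_apply, Matrix.one_apply] using this
  have key : Φr * Φrᵀ * Φ = Φ * D := by
    rw [Matrix.mul_assoc]
    ext i k
    simp only [Matrix.mul_apply, Matrix.transpose_apply, hΦr]
    have hlhs : ∀ j : Fin r,
        Φ i (Fin.castLE (hr.trans (min_le_left N m)) j) *
          (∑ l, Φ l (Fin.castLE (hr.trans (min_le_left N m)) j) * Φ l k)
        = Φ i (Fin.castLE (hr.trans (min_le_left N m)) j) *
          (if Fin.castLE (hr.trans (min_le_left N m)) j = k then (1:ℝ) else 0) := by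
      intro j; rw [horth]
    rw [Finset.sum_congr rfl (fun j _ => hlhs j)]
    by_cases hk : (k : ℕ) < r
    · have hrhs : (∑ l, Φ i l * D l k) = Φ i k := by
        rw [Finset.sum_eq_single k]
        · simp [hD, hk]
        · intro l _ hl; simp [hD, hl]
        · intro h; exact absurd (Finset.mem_univ k) h
      rw [hrhs, Finset.sum_eq_single (⟨(k : ℕ), hk⟩ : Fin r)]
      · simp [Fin.ext_iff]
      · intro j _ hj
        have : ¬ (Fin.castLE (hr.trans (min_le_left N m)) j = k) := by
          intro hc
          apply hj
          apply Fin.ext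
          simpa [Fin.ext_iff] using hc
        simp [this]
      · intro h; exact absurd (Finset.mem_univ _) h
    · have hrhs : (∑ l, Φ i l * D l k) = 0 := by
        apply Finset.sum_eq_zero; intro l _; simp [hD, hk]
      rw [hrhs]
      apply Finset.sum_eq_zero; intro j _
      have : ¬ (Fin.castLE (hr.trans (min_le_left N m)) j = k) := by
        intro hc
        apply hk
        rw [← hc]
        exact j.isLt
      simp [this]
  have hTeq : S - D * S = T := by
    ext i j
    simp only [Matrix.sub_apply, Matrix.mul_apply, hT, Matrix.of_apply]
    have hDS : (∑ l, D i l * S l j) = if (i : ℕ) < r then S i j else 0 := by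
      rw [Finset.sum_eq_single i]
      · by_cases hi : (i : ℕ) < r <;> simp [hD, hi]
      · intro l _ hl; simp [hD, Ne.symm hl]
      · intro h; exact absurd (Finset.mem_univ i) h
    rw [hDS, hS]
    split_ifs <;> first | (exfalso; omega) | ring
  have hM : U - Φr * Φrᵀ * U = Φ * T * Ψᵀ := by
    rw [hSVD, ← hTeq, Matrix.mul_sub, Matrix.sub_mul]
    have hstep : Φr * Φrᵀ * (Φ * S * Ψᵀ) = (Φr * Φrᵀ * Φ) * (S * Ψᵀ) := by
      simp only [Matrix.mul_assoc]
    rw [hstep, key]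
    simp only [Matrix.mul_assoc]
  have htrace : ∀ (A : Matrix (Fin N) (Fin m) ℝ),
      (∑ i, ∑ j, A i j ^ 2) = Matrix.trace (Aᵀ * A) := by
    intro A
    simp [Matrix.trace, Matrix.diag, Matrix.mul_apply, sq]
    rw [Finset.sum_comm]
  rw [hM, htrace]
  have hconj : (Φ * T * Ψᵀ)ᵀ * (Φ * T * Ψᵀ) = Ψ * (Tᵀ * T) * Ψᵀ := by
    have h1 : (Φ * T * Ψᵀ)ᵀ = Ψ * Tᵀ * Φᵀ := by
      simp [Matrix.transpose_mul, Matrix.mul_assoc]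
    rw [h1]
    calc Ψ * Tᵀ * Φᵀ * (Φ * T * Ψᵀ)
        = Ψ * Tᵀ * (Φᵀ * Φ) * (T * Ψᵀ) := by simp only [Matrix.mul_assoc]
      _ = Ψ * (Tᵀ * T) * Ψᵀ := by
          rw [hΦ, Matrix.mul_one]; simp only [Matrix.mul_assoc]
  rw [hconj, Matrix.trace_mul_comm, ← Matrix.mul_assoc, ← Matrix.mul_assoc, hΨ,
    Matrix.one_mul, ← htrace T]
  have hinner : ∀ i : Fin N, (∑ j : Fin m, T i j ^ 2) =
      (fun k => if k < m ∧ r ≤ k then σ k ^ 2 else 0) (i : ℕ) := by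
    intro i
    by_cases him : (i : ℕ) < m
    · rw [Finset.sum_eq_single (⟨(i : ℕ), him⟩ : Fin m)]
      · by_cases hri : r ≤ (i : ℕ) <;> simp [hT, him, hri]
      · intro j _ hj
        have : ¬ ((i : ℕ) = (j : ℕ)) := fun hc => hj (Fin.ext hc.symm)
        simp [hT, this]
      · intro h; exact absurd (Finset.mem_univ _) h
    · rw [Finset.sum_eq_zero]
      · simp [him]
      · intro j _
        have : ¬ ((i : ℕ) = (j : ℕ)) := by intro hc; exact him (hc ▸ j.isLt)
        simp [hT, this]
  rw [Finset.sum_congr rfl (fun i _ => hinner i),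
    Fin.sum_univ_eq_sum_range (fun k => if k < m ∧ r ≤ k then σ k ^ 2 else 0) N,
    ← Finset.sum_filter]
  apply Finset.sum_congr
  · ext x
    simp only [Finset.mem_filter, Finset.mem_range, Finset.mem_Ico, lt_min_iff]
    omega
  · intro x _; rfl
end

section
/- Let U = Φ Σ Ψᵀ be a singular value decomposition of U and let r ≤ min(N,m). Then for every matrix V ∈ ℝ^{N×r} with orthonormal columns (VᵀV = I_r), one has ‖U − V Vᵀ U‖_F² ≥ Σ_{i=r+1}^{min(N,m)} σ_i²; that is, the rank-r POD basis Φ_r of the first r columns of Φ minimizes the squared Frobenius projection error ‖U − V Vᵀ U‖_F² over all N×r matrices V with orthonormal columns. -/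
open Matrix BigOperators

open Finset
lemma fro_eq_trace {n p : Type*} [Fintype n] [Fintype p] (A : Matrix n p ℝ) :
    ∑ i, ∑ j, A i j ^ 2 = Matrix.trace (Aᵀ * A) := by
  simp only [Matrix.trace, Matrix.mul_apply, Matrix.diag, Matrix.transpose_apply, sq]
  exact Finset.sum_comm

lemma fro_left {n p q : Type*} [Fintype n] [Fintype p] [Fintype q] [DecidableEq n]
    (Q : Matrix q n ℝ) (hQ : Qᵀ * Q = 1) (A : Matrix n p ℝ) :
    Matrix.trace ((Q * A)ᵀ * (Q * A)) = Matrix.trace (Aᵀ * A) := by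
  rw [Matrix.transpose_mul, Matrix.mul_assoc, ← Matrix.mul_assoc Qᵀ Q, hQ, Matrix.one_mul]

lemma fro_right {n p q : Type*} [Fintype n] [Fintype p] [Fintype q] [DecidableEq p]
    (A : Matrix n p ℝ) (Q : Matrix q p ℝ) (hQ : Qᵀ * Q = 1) :
    Matrix.trace ((A * Qᵀ)ᵀ * (A * Qᵀ)) = Matrix.trace (Aᵀ * A) := by
  rw [Matrix.transpose_mul, Matrix.transpose_transpose, Matrix.mul_assoc,
    Matrix.trace_mul_comm, Matrix.mul_assoc, Matrix.mul_assoc, hQ, Matrix.mul_one]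

lemma key_scalar (b d : ℕ → ℝ) (r M : ℕ) (hrM : r < M)
    (hb0 : ∀ i, i < M → 0 ≤ b i) (hbmono : ∀ i j, i ≤ j → j < M → b j ≤ b i)
    (hd0 : ∀ i, 0 ≤ d i) (hd1 : ∀ i, d i ≤ 1)
    (hsum : ∑ t ∈ range M, d t ≤ (r : ℝ)) :
    ∑ t ∈ range M, b t * d t ≤ ∑ t ∈ range r, b t := by
  set τ := b r with hτ
  have hτ0 : 0 ≤ τ := hb0 r hrM
  have hsplit : ∑ t ∈ range r, (b t * d t) + ∑ t ∈ Ico r M, (b t * d t)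
      = ∑ t ∈ range M, b t * d t := by
    simp only [Finset.range_eq_Ico]
    exact Finset.sum_Ico_consecutive _ (Nat.zero_le r) (le_of_lt hrM)
  have hdsplit : ∑ t ∈ range r, d t + ∑ t ∈ Ico r M, d t = ∑ t ∈ range M, d t := by
    simp only [Finset.range_eq_Ico]
    exact Finset.sum_Ico_consecutive _ (Nat.zero_le r) (le_of_lt hrM)
  have hA : ∑ t ∈ range r, b t * d t ≤ ∑ t ∈ range r, (b t - τ * (1 - d t)) := by
    apply Finset.sum_le_sum
    intro t ht
    have ht' : t < r := Finset.mem_range.mp ht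
    have h1 : τ ≤ b t := hbmono t r (le_of_lt ht') hrM
    have h2 : d t ≤ 1 := hd1 t
    nlinarith [hd0 t]
  have hB : ∑ t ∈ Ico r M, b t * d t ≤ ∑ t ∈ Ico r M, τ * d t := by
    apply Finset.sum_le_sum
    intro t ht
    have ht' := Finset.mem_Ico.mp ht
    have h1 : b t ≤ τ := hbmono r t ht'.1 ht'.2
    nlinarith [hd0 t]
  have hA' : ∑ t ∈ range r, (b t - τ * (1 - d t))
      = ∑ t ∈ range r, b t - (τ * r - τ * ∑ t ∈ range r, d t) := by
    rw [Finset.sum_sub_distrib]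
    simp [Finset.mul_sum, mul_sub, Finset.sum_sub_distrib]
    ring
  have hB' : ∑ t ∈ Ico r M, τ * d t = τ * ∑ t ∈ Ico r M, d t := by
    rw [Finset.mul_sum]
  have hfin : τ * ∑ t ∈ range M, d t ≤ τ * r := mul_le_mul_of_nonneg_left hsum hτ0
  nlinarith [hsplit, hdsplit, hA, hB, hA', hB', hfin]

/-- **Optimality of the POD basis (Schmidt–Eckart–Young).**
If `U = Φ * S * Ψᵀ` is an SVD of `U ∈ ℝ^{N×m}` with singular values
`σ 0 ≥ σ 1 ≥ ... ≥ 0` and `r ≤ min N m`, then for every `V ∈ ℝ^{N×r}` with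
orthonormal columns (`Vᵀ V = 1`),
`‖U − V Vᵀ U‖_F² ≥ ∑_{i = r}^{min N m - 1} (σ i)²` (0-based indexing);
i.e. the first `r` columns of `Φ` minimize the squared Frobenius projection error. -/
theorem pod_basis_minimizes_projection_error
    (N m r : ℕ) (hN : 0 < N) (hm : 0 < m) (hr : r ≤ min N m)
    (U : Matrix (Fin N) (Fin m) ℝ)
    (Φ : Matrix (Fin N) (Fin N) ℝ)
    (Ψ : Matrix (Fin m) (Fin m) ℝ)
    (S : Matrix (Fin N) (Fin m) ℝ)
    (σ : ℕ → ℝ)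
    (hΦ : Φᵀ * Φ = 1) (hΨ : Ψᵀ * Ψ = 1)
    (hSVD : U = Φ * S * Ψᵀ)
    (hS : ∀ (i : Fin N) (j : Fin m), S i j = if (i : ℕ) = (j : ℕ) then σ (i : ℕ) else 0)
    (hmono : ∀ i j : ℕ, i ≤ j → j < min N m → σ j ≤ σ i)
    (hnonneg : ∀ i : ℕ, i < min N m → 0 ≤ σ i) :
    ∀ V : Matrix (Fin N) (Fin r) ℝ, Vᵀ * V = 1 →
      ∑ i ∈ Finset.Ico r (min N m), σ i ^ 2 ≤ ∑ i, ∑ j, (U - V * Vᵀ * U) i j ^ 2 := by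
  intro V hV
  by_cases hrm : r < min N m
  · -- main case
    have hΦΦ : Φ * Φᵀ = 1 := mul_eq_one_comm.mp hΦ
    set W : Matrix (Fin N) (Fin r) ℝ := Φᵀ * V with hWdef
    have hWT : Wᵀ = Vᵀ * Φ := by
      rw [hWdef, Matrix.transpose_mul, Matrix.transpose_transpose]
    have hW : Wᵀ * W = 1 := by
      rw [hWT, hWdef, Matrix.mul_assoc, ← Matrix.mul_assoc Φ Φᵀ V, hΦΦ, Matrix.one_mul, hV]
    set P : Matrix (Fin N) (Fin N) ℝ := W * Wᵀ with hPdef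
    have hPab : ∀ a b, P a b = ∑ k, W a k * W b k := by
      intro a b
      simp [hPdef, Matrix.mul_apply, Matrix.transpose_apply]
    have hPP : P * P = P := by
      rw [hPdef, Matrix.mul_assoc, ← Matrix.mul_assoc Wᵀ W Wᵀ, hW, Matrix.one_mul]
    have hPd0 : ∀ i, 0 ≤ P i i := by
      intro i
      rw [hPab]
      exact Finset.sum_nonneg fun k _ => mul_self_nonneg _
    have hPd1 : ∀ i, P i i ≤ 1 := by
      intro i
      have hsym : ∀ a b, P a b = P b a := by
        intro a b; rw [hPab, hPab]; exact Finset.sum_congr rfl fun k _ => mul_comm _ _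
      have h1 : P i i = ∑ t, P i t ^ 2 := by
        conv_lhs => rw [← hPP]
        rw [Matrix.mul_apply]
        exact Finset.sum_congr rfl fun t _ => by rw [sq, ← hsym t i]
      have h2 : P i i ^ 2 ≤ ∑ t, P i t ^ 2 :=
        Finset.single_le_sum (f := fun t => P i t ^ 2) (fun t _ => sq_nonneg _)
          (Finset.mem_univ i)
      nlinarith [hPd0 i]
    have htrP : ∑ i, P i i = (r : ℝ) := by
      have : Matrix.trace P = Matrix.trace (Wᵀ * W) := Matrix.trace_mul_comm W Wᵀ
      rw [hW, Matrix.trace_one] at this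
      simpa [Matrix.trace, Matrix.diag] using this
    set d : ℕ → ℝ := fun t => if h : t < N then P ⟨t, h⟩ ⟨t, h⟩ else 0 with hddef
    have hd0 : ∀ t, 0 ≤ d t := by
      intro t
      rw [hddef]
      dsimp only
      split_ifs with h
      · exact hPd0 _
      · exact le_refl 0
    have hd1 : ∀ t, d t ≤ 1 := by
      intro t
      rw [hddef]
      dsimp only
      split_ifs with h
      · exact hPd1 _
      · norm_num
    have hdN : ∑ t ∈ range N, d t = (r : ℝ) := by
      rw [← Fin.sum_univ_eq_sum_range (fun t => d t) N, ← htrP]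
      apply Finset.sum_congr rfl
      intro i _
      rw [hddef]
      dsimp only
      rw [dif_pos i.isLt]
    have hdsum : ∑ t ∈ range (min N m), d t ≤ (r : ℝ) := by
      rw [← hdN]
      exact Finset.sum_le_sum_of_subset_of_nonneg
        (Finset.range_subset_range.mpr (min_le_left N m)) (fun t _ _ => hd0 t)
    -- entries of Wᵀ * S
    have hX : ∀ (k : Fin r) (j : Fin m),
        (Wᵀ * S) k j = if h : (j : ℕ) < N then W ⟨(j : ℕ), h⟩ k * σ (j : ℕ) else 0 := by
      intro k j
      rw [Matrix.mul_apply]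
      split_ifs with h
      · rw [Finset.sum_eq_single (⟨(j : ℕ), h⟩ : Fin N)]
        · rw [hS]; simp
        · intro i _ hne
          rw [hS, if_neg, mul_zero]
          intro hc
          exact hne (Fin.ext hc)
        · intro h'; exact absurd (Finset.mem_univ _) h'
      · apply Finset.sum_eq_zero
        intro i _
        rw [hS, if_neg, mul_zero]
        intro hc
        exact h (hc ▸ i.isLt)
    have hfX : ∑ k, ∑ j, (Wᵀ * S) k j ^ 2 = ∑ t ∈ range (min N m), σ t ^ 2 * d t := by
      rw [Finset.sum_comm]
      have hinner : ∀ j : Fin m, ∑ k, (Wᵀ * S) k j ^ 2 = σ (j : ℕ) ^ 2 * d (j : ℕ) := by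
        intro j
        by_cases h : (j : ℕ) < N
        · have hdj : d (j : ℕ) = P ⟨(j : ℕ), h⟩ ⟨(j : ℕ), h⟩ := by
            rw [hddef]; dsimp only; rw [dif_pos h]
          rw [hdj, hPab, Finset.mul_sum]
          apply Finset.sum_congr rfl
          intro k _
          rw [hX, dif_pos h]
          ring
        · have hdj : d (j : ℕ) = 0 := by
            rw [hddef]; dsimp only; rw [dif_neg h]
          rw [hdj, mul_zero]
          apply Finset.sum_eq_zero
          intro k _
          rw [hX, dif_neg h]
          exact zero_pow two_ne_zero
      rw [Finset.sum_congr rfl fun j _ => hinner j,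
        Fin.sum_univ_eq_sum_range (fun t => σ t ^ 2 * d t) m]
      symm
      apply Finset.sum_subset (Finset.range_subset_range.mpr (min_le_right N m))
      intro t htm htmin
      have h1 : ¬ t < N := by
        intro h2
        exact htmin (Finset.mem_range.mpr (lt_min h2 (Finset.mem_range.mp htm)))
      have : d t = 0 := by rw [hddef]; dsimp only; rw [dif_neg h1]
      rw [this, mul_zero]
    -- Frobenius norm of U
    have hfU : ∑ i, ∑ j, U i j ^ 2 = ∑ t ∈ range (min N m), σ t ^ 2 := by
      rw [fro_eq_trace, hSVD, fro_right (Φ * S) Ψ hΨ, fro_left Φ hΦ S, ← fro_eq_trace]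
      have hinner : ∀ i : Fin N, ∑ j : Fin m, S i j ^ 2
          = if (i : ℕ) < m then σ (i : ℕ) ^ 2 else 0 := by
        intro i
        have : ∀ j : Fin m, S i j ^ 2 = if (i : ℕ) = (j : ℕ) then σ (i : ℕ) ^ 2 else 0 := by
          intro j
          rw [hS]
          split_ifs <;> simp
        rw [Finset.sum_congr rfl fun j _ => this j,
          Fin.sum_univ_eq_sum_range (fun t => if (i : ℕ) = t then σ (i : ℕ) ^ 2 else 0) m,
          Finset.sum_ite_eq]
        simp [Finset.mem_range]
      rw [Finset.sum_congr rfl fun i _ => hinner i,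
        Fin.sum_univ_eq_sum_range (fun t => if t < m then σ t ^ 2 else 0) N]
      rw [← Finset.sum_subset (Finset.range_subset_range.mpr (min_le_left N m))
        (fun t htN htmin => if_neg fun h2 =>
          htmin (Finset.mem_range.mpr (lt_min (Finset.mem_range.mp htN) h2)))]
      apply Finset.sum_congr rfl
      intro t ht
      exact if_pos (lt_of_lt_of_le (Finset.mem_range.mp ht) (min_le_right N m))
    -- Frobenius norm of Vᵀ U
    have hfVU : ∑ k, ∑ j, (Vᵀ * U) k j ^ 2 = ∑ t ∈ range (min N m), σ t ^ 2 * d t := by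
      have hVU : Vᵀ * U = (Wᵀ * S) * Ψᵀ := by
        rw [hSVD, hWT, ← Matrix.mul_assoc, ← Matrix.mul_assoc]
      rw [hVU, fro_eq_trace, fro_right (Wᵀ * S) Ψ hΨ, ← fro_eq_trace, hfX]
    -- decomposition of error
    have hE : (U - V * Vᵀ * U)ᵀ * (U - V * Vᵀ * U) = Uᵀ * U - (Vᵀ * U)ᵀ * (Vᵀ * U) := by
      have h1 : Vᵀ * (V * (Vᵀ * U)) = Vᵀ * U := by
        rw [← Matrix.mul_assoc, hV, Matrix.one_mul]
      simp only [Matrix.transpose_sub, Matrix.transpose_mul, Matrix.transpose_transpose,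
        Matrix.sub_mul, Matrix.mul_sub, Matrix.mul_assoc, h1]
      abel
    have hdec : ∑ i, ∑ j, (U - V * Vᵀ * U) i j ^ 2
        = (∑ i, ∑ j, U i j ^ 2) - ∑ k, ∑ j, (Vᵀ * U) k j ^ 2 := by
      rw [fro_eq_trace, hE, Matrix.trace_sub, ← fro_eq_trace, ← fro_eq_trace]
    have hkey : ∑ t ∈ range (min N m), σ t ^ 2 * d t ≤ ∑ t ∈ range r, σ t ^ 2 := by
      apply key_scalar _ _ _ _ hrm (fun i _ => sq_nonneg _) _ hd0 hd1 hdsum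
      intro i j hij hj
      exact pow_le_pow_left₀ (hnonneg j hj) (hmono i j hij hj) 2
    have hσsplit : ∑ t ∈ range r, σ t ^ 2 + ∑ t ∈ Ico r (min N m), σ t ^ 2
        = ∑ t ∈ range (min N m), σ t ^ 2 := by
      simp only [Finset.range_eq_Ico]
      exact Finset.sum_Ico_consecutive _ (Nat.zero_le r) (le_of_lt hrm)
    rw [hdec, hfU, hfVU]
    linarith
  · -- trivial case r = min N m
    have hIco : Finset.Ico r (min N m) = ∅ := by
      rw [le_antisymm hr (not_lt.mp hrm)]; exact Finset.Ico_self _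
    rw [hIco, Finset.sum_empty]
    apply Finset.sum_nonneg
    intro i _
    apply Finset.sum_nonneg
    intro j _
    exact sq_nonneg _
end

section
/- Let μ ∈ ℝ and let C be a 3×3 real matrix with det C > 0. Then the Neohookean deviatoric free-energy density A^dev(C) = ½ μ ((det C)^{−1/3} tr C − 3) is Fréchet differentiable at C, with derivative in direction H equal to ½ μ (det C)^{−1/3} ( tr H − (1/3)(tr C) tr(C⁻¹ H) ). -/
open Matrix

attribute [local instance] Matrix.frobeniusNormedAddCommGroup Matrix.frobeniusNormedSpace

noncomputable abbrev Mat3 := Matrix (Fin 3) (Fin 3) ℝ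

noncomputable def entryCLM (i j : Fin 3) : Mat3 →L[ℝ] ℝ :=
  LinearMap.toContinuousLinearMap
    ((LinearMap.proj j).comp (LinearMap.proj (R := ℝ) (φ := fun _ : Fin 3 => Fin 3 → ℝ) i))

@[simp] lemma entryCLM_apply (i j : Fin 3) (X : Mat3) : entryCLM i j X = X i j := rfl

noncomputable def detDeriv (C : Mat3) : Mat3 →L[ℝ] ℝ :=
  LinearMap.toContinuousLinearMap
    ((Matrix.traceLinearMap (Fin 3) ℝ ℝ).comp (LinearMap.mulLeft ℝ C.adjugate))

@[simp] lemma detDeriv_apply (C H : Mat3) : detDeriv C H = (C.adjugate * H).trace := rfl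

lemma hasFDerivAt_det3 (C : Mat3) :
    HasFDerivAt (fun X : Mat3 => X.det) (detDeriv C) C := by
  have he : ∀ i j, HasFDerivAt (fun X : Mat3 => X i j) (entryCLM i j) C :=
    fun i j => (entryCLM i j).hasFDerivAt
  have h1 := ((((((he 0 0).mul (he 1 1)).mul (he 2 2)).sub
      (((he 0 0).mul (he 1 2)).mul (he 2 1))).sub
      (((he 0 1).mul (he 1 0)).mul (he 2 2))).add
      (((he 0 1).mul (he 1 2)).mul (he 2 0))).add
      ((((he 0 2).mul (he 1 0)).mul (he 2 1)).sub
      (((he 0 2).mul (he 1 1)).mul (he 2 0)))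
  have hfun : (fun X : Mat3 => X.det) = (fun X : Mat3 =>
      X 0 0 * X 1 1 * X 2 2 - X 0 0 * X 1 2 * X 2 1
      - X 0 1 * X 1 0 * X 2 2 + X 0 1 * X 1 2 * X 2 0
      + (X 0 2 * X 1 0 * X 2 1 - X 0 2 * X 1 1 * X 2 0)) := by
    funext X; rw [Matrix.det_fin_three]; ring
  rw [hfun]
  refine h1.congr_fderiv ?_
  ext H
  simp [Matrix.adjugate_fin_three, Matrix.trace_fin_three, Matrix.mul_apply,
    Fin.sum_univ_three, smul_eq_mul, Matrix.vecMul, dotProduct]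
  have hs : ∀ (c : ℝ) (i j : Fin 3) (X : Mat3), (c • entryCLM i j) X = c * X i j :=
    fun _ _ _ _ => rfl
  erw [hs, hs, hs, hs, hs, hs, hs, hs, hs, hs, hs, hs, hs, hs, hs, hs, hs, hs]
  erw [detDeriv_apply]
  simp [Matrix.adjugate_fin_three, Matrix.trace_fin_three, Matrix.mul_apply, Fin.sum_univ_three,
    Matrix.vecMul, dotProduct]
  ring

noncomputable def trCLM : Mat3 →L[ℝ] ℝ :=
  LinearMap.toContinuousLinearMap (Matrix.traceLinearMap (Fin 3) ℝ ℝ)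

@[simp] lemma trCLM_apply (X : Mat3) : trCLM X = X.trace := rfl


/-- **Fréchet derivative of the Neohookean deviatoric free-energy density.**
For a 3×3 real matrix `C` with `det C > 0`, the map
`A^dev(C) = ½ μ ((det C)^(−1/3) tr C − 3)` is Fréchet differentiable at `C`,
with derivative in direction `H` equal to
`½ μ (det C)^(−1/3) (tr H − (1/3)(tr C) tr(C⁻¹ H))`. -/
theorem neohookean_deviatoric_hasFDerivAt
    (mu : ℝ) (C : Matrix (Fin 3) (Fin 3) ℝ) (hC : 0 < C.det)
    (Adev : Matrix (Fin 3) (Fin 3) ℝ → ℝ)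
    (hAdev : ∀ X : Matrix (Fin 3) (Fin 3) ℝ,
      Adev X = 1 / 2 * mu * (X.det ^ (-(1 / 3 : ℝ)) * Matrix.trace X - 3))
    (A' : Matrix (Fin 3) (Fin 3) ℝ →L[ℝ] ℝ)
    (hA' : ∀ H : Matrix (Fin 3) (Fin 3) ℝ,
      A' H = 1 / 2 * mu * C.det ^ (-(1 / 3 : ℝ)) *
        (Matrix.trace H - 1 / 3 * Matrix.trace C * Matrix.trace (C⁻¹ * H))) :
    HasFDerivAt Adev A' C := by
  have hne : C.det ≠ 0 := ne_of_gt hC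
  have hrpow : HasDerivAt (fun x : ℝ => x ^ (-(1 / 3) : ℝ))
      ((-(1 / 3) : ℝ) * C.det ^ ((-(1 / 3) : ℝ) - 1)) C.det :=
    Real.hasDerivAt_rpow_const (Or.inl hne)
  have h1 := hrpow.comp_hasFDerivAt C (hasFDerivAt_det3 C)
  have h2 := (h1.mul trCLM.hasFDerivAt).sub_const 3
  have h3 := h2.const_mul (1 / 2 * mu)
  have hfun : Adev = fun X : Mat3 =>
      1 / 2 * mu * (X.det ^ (-(1 / 3) : ℝ) * Matrix.trace X - 3) := funext hAdev
  rw [hfun]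
  refine h3.congr_fderiv ?_
  ext H
  have hinv : Matrix.trace (C⁻¹ * H) = (C.det)⁻¹ * (C.adjugate * H).trace := by
    rw [Matrix.inv_def, Ring.inverse_eq_inv, Matrix.smul_mul, Matrix.trace_smul, smul_eq_mul]
  have hpow : C.det ^ ((-(1 / 3) : ℝ) - 1) * C.det = C.det ^ (-(1 / 3) : ℝ) := by
    rw [Real.rpow_sub_one hne, div_mul_cancel₀ _ hne]
  have hd : (C.adjugate * H).trace = C.det * (C.det⁻¹ * (C.adjugate * H).trace) := by
    field_simp
  simp only [ContinuousLinearMap.coe_smul', Pi.smul_apply, ContinuousLinearMap.add_apply,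
    ContinuousLinearMap.coe_sub', Pi.sub_apply, ContinuousLinearMap.smul_apply,
    smul_eq_mul, hA' H, hinv, detDeriv_apply, trCLM_apply, Function.comp_apply]
  have ht : ∀ (c : ℝ) (X : Mat3), (c • trCLM) X = c * X.trace := fun _ _ => rfl
  have hD : ∀ (c : ℝ) (X : Mat3), (c • detDeriv C) X = c * (C.adjugate * X).trace :=
    fun _ _ => rfl
  erw [ht, hD, hA' H]
  rw [hinv]
  set s := (C.adjugate * H).trace
  have key : C.det ^ ((-(1 / 3) : ℝ) - 1) * s = C.det ^ (-(1 / 3) : ℝ) * (C.det⁻¹ * s) := by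
    rw [← hpow]; field_simp
  linear_combination (1 / 2 * mu * Matrix.trace C * (-(1 / 3))) * key
end
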